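/- Let 0 < q ≤ (3-√5)/2 and let f be a solution of Schilling's problem. If f vanishes on the open interval (-(1-Q), 1-Q), then f is identically zero, where Q = q/(1-q). -/

import Mathlib

lemma schilling_aux (q : ℝ) (hq : 0 < q) (hkey : q * q + 2 * q < 1)
    (f : ℝ → ℝ)
    (heq : ∀ x : ℝ, f (q * x) = 1 / (4 * q) * (f (x - 1) + f (x + 1) + 2 * f x))
    (hQ : ∀ x : ℝ, |x| > q / (1 - q) → f x = 0)
    (h0 : ∀ x : ℝ, -(1 - q / (1 - q)) < x → x < 1 - q / (1 - q) → f x = 0) :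
    ∀ y : ℝ, -(1 - q / (1 - q)) < y → y < q / (1 - q) → f y = 0 := by
  have hq2 : q < 1/2 := by nlinarith
  have h1q : 0 < 1 - q := by linarith
  set Q := q / (1 - q) with hQdef
  have hQpos : 0 < Q := div_pos hq h1q
  have hQlt1 : Q < 1 := by rw [hQdef, div_lt_one h1q]; linarith
  have hqQ : q * Q < 1 - Q := by
    rw [hQdef, show q * (q/(1-q)) = q*q/(1-q) from by ring,
        show 1 - q/(1-q) = (1 - 2*q)/(1-q) from by field_simp; ring,
        div_lt_div_iff_of_pos_right h1q]
    nlinarith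
  have hQ1 : q * (Q + 1) = Q := by rw [hQdef]; field_simp; ring
  have key : ∀ n : ℕ, ∀ y : ℝ, -(1 - Q) < y → y ≤ Q → (2*Q - 1) * q^n < Q - y → f y = 0 := by
    intro n
    induction n with
    | zero =>
      intro y hy1 hy2 hy3
      rw [pow_zero, mul_one] at hy3
      exact h0 y hy1 (by linarith)
    | succ n ih =>
      intro y hy1 hy2 hy3
      by_cases hc : y < 1 - Q
      · exact h0 y hy1 hc
      · push_neg at hc
        have hxQ : Q < y / q := by rw [lt_div_iff₀ hq]; nlinarith
        have hyq : q * (y / q) = y := by field_simp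
        have hfx : f (y / q) = 0 := hQ _ (by rw [abs_of_pos (lt_trans hQpos hxQ)]; exact hxQ)
        have hfx1 : f (y / q + 1) = 0 := hQ _ (by
          rw [abs_of_pos (by linarith)]; linarith)
        have hstep := heq (y / q)
        rw [hyq, hfx, hfx1] at hstep
        have hle : y / q ≤ Q + 1 := by
          rw [div_le_iff₀ hq]; nlinarith
        have h1 : Q - (y / q - 1) = (Q - y) / q := by
          rw [eq_div_iff (ne_of_gt hq)]
          have : y / q * q = y := by field_simp
          nlinarith [this]
        have hz : f (y / q - 1) = 0 := by
          apply ih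
          · linarith
          · linarith
          · rw [h1, lt_div_iff₀ hq]
            calc (2*Q - 1) * q^n * q = (2*Q - 1) * q^(n+1) := by ring
            _ < Q - y := hy3
        rw [hz] at hstep
        simpa using hstep
  intro y hy1 hy2
  rcases le_or_gt (2*Q - 1) 0 with h | h
  · exact key 0 y hy1 (le_of_lt hy2) (by rw [pow_zero, mul_one]; linarith)
  · obtain ⟨n, hn⟩ := exists_pow_lt_of_lt_one
      (show (0:ℝ) < (Q - y)/(2*Q-1) from div_pos (by linarith) h) (show q < 1 by linarith)
    exact key n y hy1 (le_of_lt hy2) ((lt_div_iff₀' h).mp hn)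

theorem schilling_case1 (q : ℝ) (hq : 0 < q) (hq1 : q ≤ (3 - Real.sqrt 5) / 2)
    (f : ℝ → ℝ)
    (heq : ∀ x : ℝ, f (q * x) = 1 / (4 * q) * (f (x - 1) + f (x + 1) + 2 * f x))
    (hQ : ∀ x : ℝ, |x| > q / (1 - q) → f x = 0)
    (h0 : ∀ x : ℝ, -(1 - q / (1 - q)) < x → x < 1 - q / (1 - q) → f x = 0) :
    ∀ x : ℝ, f x = 0 := by
  have hs5 : Real.sqrt 5 ^ 2 = 5 := Real.sq_sqrt (by norm_num)
  have hs5n : 0 ≤ Real.sqrt 5 := Real.sqrt_nonneg 5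
  have hkey : q * q + 2 * q < 1 := by nlinarith [sq_nonneg (Real.sqrt 5 - 11/5)]
  have hq2 : q < 1/2 := by nlinarith
  have h1q : 0 < 1 - q := by linarith
  set Q := q / (1 - q) with hQdef
  have hQpos : 0 < Q := div_pos hq h1q
  have hQlt1 : Q < 1 := by rw [hQdef, div_lt_one h1q]; linarith
  -- positive side
  have h1 : ∀ y : ℝ, -(1 - Q) < y → y < Q → f y = 0 :=
    schilling_aux q hq hkey f heq hQ h0
  -- mirrored function
  have heq' : ∀ x : ℝ, (fun z => f (-z)) (q * x) =
      1 / (4 * q) * ((fun z => f (-z)) (x - 1) + (fun z => f (-z)) (x + 1)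
        + 2 * (fun z => f (-z)) x) := by
    intro x
    simp only
    rw [show -(q * x) = q * (-x) from by ring, heq (-x),
        show (-x - 1 : ℝ) = -(x + 1) from by ring,
        show (-x + 1 : ℝ) = -(x - 1) from by ring]
    ring
  have hQ' : ∀ x : ℝ, |x| > Q → (fun z => f (-z)) x = 0 := by
    intro x hx; exact hQ (-x) (by rwa [abs_neg])
  have h0' : ∀ x : ℝ, -(1 - Q) < x → x < 1 - Q → (fun z => f (-z)) x = 0 := by
    intro x hx1 hx2; exact h0 (-x) (by linarith) (by linarith)
  have h2 : ∀ y : ℝ, -(1 - Q) < y → y < Q → f (-y) = 0 :=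
    schilling_aux q hq hkey (fun z => f (-z)) heq' hQ' h0'
  -- interior
  have interior : ∀ y : ℝ, |y| < Q → f y = 0 := by
    intro y hy
    obtain ⟨hya, hyb⟩ := abs_lt.mp hy
    by_cases hc : -(1 - Q) < y
    · exact h1 y hc hyb
    · push_neg at hc
      have := h2 (-y) (by linarith) (by linarith)
      simpa using this
  -- endpoints
  have h4q : (1 : ℝ) / (4 * q) ≠ 0 := by positivity
  have e1 : f (Q - 1) + 2 * f Q = 0 := by
    have hE := heq Q
    have hz1 : f (q * Q) = 0 := interior _ (by
      rw [abs_of_pos (by positivity)]; nlinarith)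
    have hz2 : f (Q + 1) = 0 := hQ _ (by rw [abs_of_pos (by linarith)]; linarith)
    rw [hz1, hz2] at hE
    have : f (Q - 1) + 0 + 2 * f Q = 0 := by
      rcases mul_eq_zero.mp hE.symm with h | h
      · exact absurd h h4q
      · exact h
    linarith
  have e2 : f (-Q + 1) + 2 * f (-Q) = 0 := by
    have hE := heq (-Q)
    have hz1 : f (q * -Q) = 0 := interior _ (by
      rw [show q * -Q = -(q*Q) from by ring, abs_neg, abs_of_pos (by positivity)]; nlinarith)
    have hz2 : f (-Q - 1) = 0 := hQ _ (by
      rw [show (-Q - 1 : ℝ) = -(Q+1) from by ring, abs_neg, abs_of_pos (by linarith)]; linarith)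
    rw [hz1, hz2] at hE
    have : 0 + f (-Q + 1) + 2 * f (-Q) = 0 := by
      rcases mul_eq_zero.mp hE.symm with h | h
      · exact absurd h h4q
      · exact h
    linarith
  have endQ : f Q = 0 ∧ f (-Q) = 0 := by
    rcases lt_trichotomy (1 - Q) Q with h | h | h
    · have hz1 : f (Q - 1) = 0 := interior _ (by
        rw [show (Q - 1 : ℝ) = -(1 - Q) from by ring, abs_neg, abs_of_pos (by linarith)]; linarith)
      have hz2 : f (-Q + 1) = 0 := interior _ (by
        rw [show (-Q + 1 : ℝ) = (1 - Q) from by ring, abs_of_pos (by linarith)]; linarith)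
      constructor <;> [skip; skip] <;> linarith [e1, e2, hz1, hz2]
    · rw [show (Q - 1 : ℝ) = -Q from by linarith] at e1
      rw [show (-Q + 1 : ℝ) = Q from by linarith] at e2
      constructor <;> linarith
    · have hz1 : f (Q - 1) = 0 := hQ _ (by
        rw [show (Q - 1 : ℝ) = -(1 - Q) from by ring, abs_neg, abs_of_pos (by linarith)]; linarith)
      have hz2 : f (-Q + 1) = 0 := hQ _ (by
        rw [show (-Q + 1 : ℝ) = (1 - Q) from by ring, abs_of_pos (by linarith)]; linarith)
      constructor <;> linarith
  -- conclude
  intro x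
  rcases lt_trichotomy |x| Q with h | h | h
  · exact interior x h
  · rcases (abs_eq (le_of_lt hQpos)).mp h with rfl | rfl
    · exact endQ.1
    · exact endQ.2
  · exact hQ x h
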